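/- Reduction of the SVD of a blown up matrix to a small matrix: the nonzero singular values of the m×n blown up matrix B of the a×b pattern matrix P (with block sizes m_i, n_j) coincide, with multiplicity, with the nonzero singular values of the a×b matrix D_m^{1/2} P D_n^{1/2}, where D_m = diag(m₁,...,m_a) and D_n = diag(n₁,...,n_b). -/

import Mathlib

noncomputable def sval {m n : ℕ} (A : Matrix (Fin m) (Fin n) ℝ) (i : Fin n) : ℝ :=
  Real.sqrt ((Matrix.isHermitian_conjTranspose_mul_self A).eigenvalues
    (Tuple.sort (Matrix.isHermitian_conjTranspose_mul_self A).eigenvalues i.rev))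

section aux

open Polynomial Matrix

/-- Rectangular matrices `A`, `B`: scalar matrices commute past. -/
private lemma aux_mul_diagX {n b : ℕ} (A : Matrix (Fin n) (Fin b) ℝ[X]) :
    A * Matrix.diagonal (fun _ : Fin b => (X : ℝ[X])) = Matrix.diagonal (fun _ : Fin n => (X : ℝ[X])) * A := by
  refine Matrix.ext fun i j => ?_
  simp [Matrix.scalar_apply, Matrix.mul_diagonal, Matrix.diagonal_mul, mul_comm]

/-- `charpoly (A*B) * X^b = X^n * charpoly (B*A)` for rectangular `A`, `B`. -/
private lemma aux_charpoly_mul_comm_rect {n b : ℕ} (A : Matrix (Fin n) (Fin b) ℝ)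
    (B : Matrix (Fin b) (Fin n) ℝ) :
    (A * B).charpoly * X ^ b = X ^ n * (B * A).charpoly := by
  classical
  set A' := A.map (C : ℝ →+* ℝ[X]) with hA'
  set B' := B.map (C : ℝ →+* ℝ[X]) with hB'
  set S : Matrix (Fin n) (Fin n) ℝ[X] := Matrix.scalar (Fin n) (X : ℝ[X]) with hS
  set T : Matrix (Fin b) (Fin b) ℝ[X] := Matrix.scalar (Fin b) (X : ℝ[X]) with hT
  have hAB : (A * B).map (C : ℝ →+* ℝ[X]) = A' * B' := by
    simp [hA', hB', Matrix.map_mul]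
  have hBA : (B * A).map (C : ℝ →+* ℝ[X]) = B' * A' := by
    simp [hA', hB', Matrix.map_mul]
  have hM1 : Matrix.fromBlocks S A' B' 1 =
      Matrix.fromBlocks 1 A' 0 1 * Matrix.fromBlocks (S - A' * B') 0 B' 1 := by
    simp [Matrix.fromBlocks_multiply, Matrix.mul_sub, Matrix.sub_mul]
  have hM2 : Matrix.fromBlocks 1 A' B' T =
      Matrix.fromBlocks 1 0 B' 1 * Matrix.fromBlocks 1 A' 0 (T - B' * A') := by
    simp [Matrix.fromBlocks_multiply]
  have hbridge : Matrix.fromBlocks S A' B' 1 * Matrix.fromBlocks 1 0 0 T =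
      Matrix.fromBlocks S 0 0 (1 : Matrix (Fin b) (Fin b) ℝ[X]) *
        Matrix.fromBlocks 1 A' B' T := by
    simp [Matrix.fromBlocks_multiply, aux_mul_diagX A', hS, hT]
  have hdet1 : (Matrix.fromBlocks S A' B' 1).det = (A * B).charpoly := by
    rw [hM1, Matrix.det_mul, Matrix.det_fromBlocks_zero₂₁, Matrix.det_fromBlocks_zero₁₂]
    simp [Matrix.charpoly, Matrix.charmatrix, hAB, hS]
  have hdet2 : (Matrix.fromBlocks 1 A' B' T).det = (B * A).charpoly := by
    rw [hM2, Matrix.det_mul, Matrix.det_fromBlocks_zero₁₂, Matrix.det_fromBlocks_zero₂₁]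
    simp [Matrix.charpoly, Matrix.charmatrix, hBA, hT]
  have hdetT : (T).det = X ^ b := by simp [hT, Matrix.scalar_apply, Matrix.det_diagonal]
  have hdetS : (S).det = X ^ n := by simp [hS, Matrix.scalar_apply, Matrix.det_diagonal]
  have := congrArg Matrix.det hbridge
  rwa [Matrix.det_mul, Matrix.det_mul, hdet1, hdet2,
    Matrix.det_fromBlocks_zero₂₁, Matrix.det_fromBlocks_zero₁₂, Matrix.det_one, hdetT, hdetS,
    Matrix.det_one, one_mul, mul_one] at this

/-- Roots of the characteristic polynomial of a real symmetric matrix are its eigenvalues. -/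
private lemma aux_roots_charpoly {k : ℕ} {A : Matrix (Fin k) (Fin k) ℝ}
    (hA : A.IsHermitian) :
    A.charpoly.roots = Finset.univ.val.map hA.eigenvalues := by
  classical
  set U := (Matrix.IsHermitian.eigenvectorUnitary hA : Matrix (Fin k) (Fin k) ℝ) with hUdef
  have hU : U * star U = 1 :=
    Matrix.mem_unitaryGroup_iff.mp (Matrix.IsHermitian.eigenvectorUnitary hA).2
  set d : Fin k → ℝ := hA.eigenvalues with hd
  have hspec : A = U * Matrix.diagonal d * star U := by
    have h := hA.spectral_theorem
    simpa using h
  have hcmD : Matrix.charmatrix (Matrix.diagonal d) =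
      Matrix.diagonal (fun i => X - C (d i)) := by
    ext i j
    rcases eq_or_ne i j with rfl | h
    · simp
    · simp [Matrix.charmatrix_apply, Matrix.diagonal_apply_ne _ h]
  have hD : (Matrix.diagonal d).charpoly = ∏ i, (X - C (d i)) := by
    rw [Matrix.charpoly, hcmD, Matrix.det_diagonal]
  have hUV : U.map (C : ℝ →+* ℝ[X]) * (star U).map (C : ℝ →+* ℝ[X]) = 1 := by
    rw [← Matrix.map_mul, hU, Matrix.map_one _ (map_zero _) (map_one _)]
  have hcm : Matrix.charmatrix A =
      U.map (C : ℝ →+* ℝ[X]) * Matrix.charmatrix (Matrix.diagonal d) *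
        (star U).map (C : ℝ →+* ℝ[X]) := by
    rw [Matrix.charmatrix, Matrix.charmatrix, Matrix.mul_sub, Matrix.sub_mul]
    congr 1
    · have hcomm := Matrix.scalar_commute (n := Fin k) (X : ℝ[X])
        (fun r' => Commute.all X r') (U.map (C : ℝ →+* ℝ[X]))
      rw [← hcomm.eq, mul_assoc, hUV, mul_one]
    · rw [hspec]
      simp [Matrix.map_mul, RingHom.mapMatrix_apply]
  have hAD : A.charpoly = (Matrix.diagonal d).charpoly := by
    rw [Matrix.charpoly, Matrix.charpoly, hcm, Matrix.det_mul, Matrix.det_mul]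
    have : (U.map (C : ℝ →+* ℝ[X])).det * ((star U).map (C : ℝ →+* ℝ[X])).det = 1 := by
      rw [← Matrix.det_mul, hUV, Matrix.det_one]
    rw [mul_right_comm, this, one_mul]
  rw [hAD, hD, Finset.prod_eq_multiset_prod]
  have heq : Multiset.map (fun i => X - C (d i)) Finset.univ.val
      = Multiset.map (fun a => X - C a) (Multiset.map d Finset.univ.val) := by
    rw [Multiset.map_map]
    rfl
  rw [heq, Polynomial.roots_multiset_prod_X_sub_C]

/-- indicator matrix of a map -/
private def indMat {m a : ℕ} (φ : Fin m → Fin a) : Matrix (Fin m) (Fin a) ℝ :=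
  Matrix.of fun i α => if φ i = α then 1 else 0

private lemma indMat_transpose_mul_self {m a : ℕ} (φ : Fin m → Fin a) :
    (indMat φ)ᵀ * indMat φ =
      Matrix.diagonal (fun α => ((Finset.univ.filter (fun x => φ x = α)).card : ℝ)) := by
  classical
  ext α β
  rcases eq_or_ne α β with rfl | h
  · simp only [Matrix.mul_apply, Matrix.transpose_apply, indMat, Matrix.of_apply,
      Matrix.diagonal_apply_eq]
    rw [Finset.card_filter]
    push_cast
    refine Finset.sum_congr rfl fun i _ => ?_
    split <;> simp
  · simp only [Matrix.mul_apply, Matrix.transpose_apply, indMat, Matrix.of_apply,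
      Matrix.diagonal_apply_ne _ h]
    refine Finset.sum_eq_zero fun i _ => ?_
    by_cases h1 : φ i = α
    · simp [h1, h]
    · simp [h1]

private lemma aux_filter_map_sqrt (s : Multiset ℝ) (h : ∀ x ∈ s, 0 ≤ x) :
    Multiset.filter (fun x => x ≠ 0) (s.map Real.sqrt) =
    (Multiset.filter (fun x => x ≠ 0) s).map Real.sqrt := by
  classical
  induction s using Multiset.induction with
  | empty => simp
  | cons a s ih =>
    have ha := h a (Multiset.mem_cons_self a s)
    have hs : ∀ x ∈ s, 0 ≤ x := fun x hx => h x (Multiset.mem_cons_of_mem hx)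
    by_cases h0 : a = 0
    · subst h0
      simp [Multiset.filter_cons, ih hs]
    · have hpos : 0 < a := lt_of_le_of_ne ha (Ne.symm h0)
      have hsq : Real.sqrt a ≠ 0 := ne_of_gt (Real.sqrt_pos.mpr hpos)
      simp [Multiset.filter_cons, h0, hsq, ih hs]

private lemma aux_sval_multiset_eq {k l : ℕ} (A : Matrix (Fin k) (Fin l) ℝ) :
    (Finset.univ.val : Multiset (Fin l)).map (sval A)
      = ((Finset.univ.val : Multiset (Fin l)).map
          (Matrix.isHermitian_conjTranspose_mul_self A).eigenvalues).map Real.sqrt := by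
  classical
  set eig := (Matrix.isHermitian_conjTranspose_mul_self A).eigenvalues with heig
  set e : Equiv.Perm (Fin l) := (Fin.revPerm).trans (Tuple.sort eig) with he
  have h1 : (Finset.univ.val : Multiset (Fin l)).map (sval A)
      = (Finset.univ.val : Multiset (Fin l)).map ((Real.sqrt ∘ eig) ∘ e) := by
    refine Multiset.map_congr rfl fun i _ => ?_
    simp [sval, heig, he, Function.comp]
  have h2 : (Finset.univ.val : Multiset (Fin l)).map ⇑e = Finset.univ.val := by
    have h3 := Finset.map_univ_equiv e
    calc (Finset.univ.val : Multiset (Fin l)).map ⇑e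
        = (Finset.univ.map e.toEmbedding).val := rfl
      _ = Finset.univ.val := by rw [h3]
  rw [h1, ← Multiset.map_map ((Real.sqrt ∘ eig)) ⇑e, h2, ← Multiset.map_map]

set_option maxHeartbeats 1000000 in
private lemma aux_charpoly_eq_main {a b m n : ℕ} (P : Matrix (Fin a) (Fin b) ℝ)
    (φ : Fin m → Fin a) (ψ : Fin n → Fin b)
    (B : Matrix (Fin m) (Fin n) ℝ) (hB : ∀ i j, B i j = P (φ i) (ψ j)) :
    (Bᴴ * B).charpoly * X ^ b = X ^ n *
      ((Matrix.diagonal (fun i => Real.sqrt ((Finset.univ.filter (fun x => φ x = i)).card : ℝ)) * P *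
        Matrix.diagonal (fun j => Real.sqrt ((Finset.univ.filter (fun x => ψ x = j)).card : ℝ)))ᴴ *
       (Matrix.diagonal (fun i => Real.sqrt ((Finset.univ.filter (fun x => φ x = i)).card : ℝ)) * P *
        Matrix.diagonal (fun j => Real.sqrt ((Finset.univ.filter (fun x => ψ x = j)).card : ℝ)))).charpoly := by
  classical
  set dm : Fin a → ℝ := fun α => ((Finset.univ.filter (fun x => φ x = α)).card : ℝ) with hdm
  set dn : Fin b → ℝ := fun β => ((Finset.univ.filter (fun x => ψ x = β)).card : ℝ) with hdn
  set E := indMat φ with hE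
  set F := indMat ψ with hF
  set M : Matrix (Fin b) (Fin b) ℝ := Pᵀ * Matrix.diagonal dm * P with hM
  have hmdm : ∀ α, 0 ≤ dm α := fun α => Nat.cast_nonneg _
  have hmdn : ∀ β, 0 ≤ dn β := fun β => Nat.cast_nonneg _
  have hBfact : B = E * P * Fᵀ := by
    ext i j
    simp [Matrix.mul_apply, Matrix.transpose_apply, hE, hF, indMat, hB,
      ite_mul, mul_ite, one_mul, mul_one, Finset.sum_ite_eq]
  have hBtB : Bᴴ * B = F * (M * Fᵀ) := by
    rw [Matrix.conjTranspose_eq_transpose_of_trivial, hBfact]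
    rw [Matrix.transpose_mul, Matrix.transpose_mul, Matrix.transpose_transpose]
    calc Fᵀᵀ * (Pᵀ * Eᵀ) * (E * P * Fᵀ)
        = F * (Pᵀ * (Eᵀ * E) * P * Fᵀ) := by
          rw [Matrix.transpose_transpose]
          simp only [Matrix.mul_assoc]
      _ = F * (M * Fᵀ) := by rw [indMat_transpose_mul_self, hM]
  have hFtF : Fᵀ * F = Matrix.diagonal dn := indMat_transpose_mul_self ψ
  set Dm2 := Matrix.diagonal (fun α => Real.sqrt (dm α)) with hDm2
  set Dn2 := Matrix.diagonal (fun β => Real.sqrt (dn β)) with hDn2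
  have hDm2sq : Dm2 * Dm2 = Matrix.diagonal dm := by
    rw [hDm2, Matrix.diagonal_mul_diagonal]
    exact congrArg Matrix.diagonal (funext fun α => Real.mul_self_sqrt (hmdm α))
  have hDn2sq : Dn2 * Dn2 = Matrix.diagonal dn := by
    rw [hDn2, Matrix.diagonal_mul_diagonal]
    exact congrArg Matrix.diagonal (funext fun β => Real.mul_self_sqrt (hmdn β))
  have hQtQ : (Dm2 * P * Dn2)ᴴ * (Dm2 * P * Dn2) = Dn2 * (M * Dn2) := by
    rw [Matrix.conjTranspose_eq_transpose_of_trivial, Matrix.transpose_mul, Matrix.transpose_mul,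
      Matrix.diagonal_transpose, Matrix.diagonal_transpose]
    calc Dn2 * (Pᵀ * Dm2) * (Dm2 * P * Dn2)
        = Dn2 * (Pᵀ * (Dm2 * Dm2) * P * Dn2) := by simp only [Matrix.mul_assoc]
      _ = Dn2 * (M * Dn2) := by rw [hDm2sq, hM, Matrix.mul_assoc]
  have key1 : (Bᴴ * B).charpoly * X ^ b = X ^ n * (M * Matrix.diagonal dn).charpoly := by
    rw [hBtB, aux_charpoly_mul_comm_rect F (M * Fᵀ), Matrix.mul_assoc, hFtF]
  have key2 : ((Dm2 * P * Dn2)ᴴ * (Dm2 * P * Dn2)).charpoly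
      = (M * Matrix.diagonal dn).charpoly := by
    have h := aux_charpoly_mul_comm_rect Dn2 (M * Dn2)
    rw [Matrix.mul_assoc M Dn2 Dn2, hDn2sq] at h
    have hX : (X : ℝ[X]) ^ b ≠ 0 := pow_ne_zero _ Polynomial.X_ne_zero
    rw [hQtQ]
    apply mul_left_cancel₀ hX
    rw [mul_comm ((X:ℝ[X])^b) ((Dn2 * (M * Dn2)).charpoly), h]
  rw [key1, key2]


private lemma aux_main {a b m n : ℕ} (P : Matrix (Fin a) (Fin b) ℝ)
    (φ : Fin m → Fin a) (ψ : Fin n → Fin b)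
    (B : Matrix (Fin m) (Fin n) ℝ)
    (hB : ∀ i j, B i j = P (φ i) (ψ j)) :
    Multiset.filter (fun x => x ≠ 0)
        ((Finset.univ.val : Multiset (Fin n)).map (sval B)) =
    Multiset.filter (fun x => x ≠ 0)
        ((Finset.univ.val : Multiset (Fin b)).map
          (sval (Matrix.diagonal
              (fun i => Real.sqrt ((Finset.univ.filter (fun x => φ x = i)).card : ℝ)) * P *
            Matrix.diagonal
              (fun j => Real.sqrt ((Finset.univ.filter (fun x => ψ x = j)).card : ℝ))))) := by
  classical
  set Q := Matrix.diagonal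
        (fun i => Real.sqrt ((Finset.univ.filter (fun x => φ x = i)).card : ℝ)) * P *
      Matrix.diagonal
        (fun j => Real.sqrt ((Finset.univ.filter (fun x => ψ x = j)).card : ℝ)) with hQ
  have key := aux_charpoly_eq_main P φ ψ B hB
  rw [← hQ] at key
  have hXf : ∀ k : ℕ, Multiset.filter (fun x => x ≠ 0) ((X : ℝ[X]) ^ k).roots = 0 := by
    intro k
    rw [Polynomial.roots_pow, Polynomial.roots_X, Multiset.nsmul_singleton]
    exact Multiset.filter_eq_nil.mpr (fun x hx => by simp [Multiset.eq_of_mem_replicate hx])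
  have hne1 : (Bᴴ * B).charpoly * (X : ℝ[X]) ^ b ≠ 0 :=
    mul_ne_zero (Matrix.charpoly_monic _).ne_zero (pow_ne_zero _ Polynomial.X_ne_zero)
  have hne2 : (X : ℝ[X]) ^ n * (Qᴴ * Q).charpoly ≠ 0 :=
    mul_ne_zero (pow_ne_zero _ Polynomial.X_ne_zero) (Matrix.charpoly_monic _).ne_zero
  have hroots : (Bᴴ * B).charpoly.roots + ((X : ℝ[X]) ^ b).roots
      = ((X : ℝ[X]) ^ n).roots + (Qᴴ * Q).charpoly.roots := by
    rw [← Polynomial.roots_mul hne1, ← Polynomial.roots_mul hne2, key]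
  have hfil : Multiset.filter (fun x => x ≠ 0) (Bᴴ * B).charpoly.roots
      = Multiset.filter (fun x => x ≠ 0) (Qᴴ * Q).charpoly.roots := by
    have := congrArg (Multiset.filter (fun x => x ≠ 0)) hroots
    rwa [Multiset.filter_add, Multiset.filter_add, hXf, hXf, add_zero, zero_add] at this
  rw [aux_roots_charpoly (Matrix.isHermitian_conjTranspose_mul_self B),
    aux_roots_charpoly (Matrix.isHermitian_conjTranspose_mul_self Q)] at hfil
  have hnonnegB : ∀ x ∈ (Finset.univ.val : Multiset (Fin n)).map
      (Matrix.isHermitian_conjTranspose_mul_self B).eigenvalues, 0 ≤ x := by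
    intro x hx
    obtain ⟨i, -, rfl⟩ := Multiset.mem_map.mp hx
    exact (Matrix.posSemidef_conjTranspose_mul_self B).eigenvalues_nonneg i
  have hnonnegQ : ∀ x ∈ (Finset.univ.val : Multiset (Fin b)).map
      (Matrix.isHermitian_conjTranspose_mul_self Q).eigenvalues, 0 ≤ x := by
    intro x hx
    obtain ⟨i, -, rfl⟩ := Multiset.mem_map.mp hx
    exact (Matrix.posSemidef_conjTranspose_mul_self Q).eigenvalues_nonneg i
  rw [aux_sval_multiset_eq B, aux_sval_multiset_eq Q,
    aux_filter_map_sqrt _ hnonnegB, aux_filter_map_sqrt _ hnonnegQ, hfil]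

end aux

/-- The nonzero singular values of the blown up matrix `B` coincide, with multiplicity,
with the nonzero singular values of `D_m^{1/2} P D_n^{1/2}`. -/
theorem stmt4 {a b m n : ℕ} (P : Matrix (Fin a) (Fin b) ℝ)
    (φ : Fin m → Fin a) (ψ : Fin n → Fin b)
    (hφ : Function.Surjective φ) (hψ : Function.Surjective ψ)
    (B : Matrix (Fin m) (Fin n) ℝ)
    (hB : ∀ i j, B i j = P (φ i) (ψ j)) :
    Multiset.filter (fun x => x ≠ 0)
        ((Finset.univ.val : Multiset (Fin n)).map (sval B)) =
    Multiset.filter (fun x => x ≠ 0)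
        ((Finset.univ.val : Multiset (Fin b)).map
          (sval (Matrix.diagonal
              (fun i => Real.sqrt ((Finset.univ.filter (fun x => φ x = i)).card : ℝ)) * P *
            Matrix.diagonal
              (fun j => Real.sqrt ((Finset.univ.filter (fun x => ψ x = j)).card : ℝ))))) :=
  aux_main P φ ψ B hB
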